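/- For every λ ∈ X⁺ and every k ≥ 1: E^k_λ = ∑_{(μ₀,…,μ_{k−1}) ∈ (X⁺)^k} ( ∏_{0≤h≤k−2} p_{μ_h, λ^h + p·μ_{h+1}} ) · p_{μ_{k−1}, ∑_{j≥k−1} p^{j−k+1} λ^j} · E⁰_{μ₀}, a sum with only finitely many nonzero terms. -/

import Mathlib

/-!
Setting: `X⁺ = I → ℕ` (componentwise addition) for a finite index set `I`, `p ≥ 2`.
`digit p lam k` is the `k`-th base-`p` digit `λ^k` of `lam` (so `λ^k ∈ X⁺_red` and
`lam = ∑_k p^k • λ^k`); `shift p k lam = ∑_{j≥k} p^{j-k} λ^j`;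
`trunc p k lam = ∑_{0≤j≤k-1} p^j λ^j`.
-/

namespace LusztigChar

variable {I : Type*} [Fintype I] {R : Type*} [CommRing R]

/-- The `k`-th digit `λ^k` of `λ ∈ X⁺ = I → ℕ` in base `p`. -/
def digit (p : ℕ) (lam : I → ℕ) (k : ℕ) : I → ℕ := fun i => lam i / p ^ k % p

/-- `∑_{j≥k} p^{j-k} λ^j ∈ X⁺` (a sum with finitely many nonzero terms). -/
noncomputable def shift (p k : ℕ) (lam : I → ℕ) : I → ℕ :=
  ∑ᶠ j : ℕ, p ^ j • digit p lam (k + j)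

/-- `∑_{0≤j≤k-1} p^j λ^j ∈ X⁺`. -/
def trunc (p k : ℕ) (lam : I → ℕ) : I → ℕ :=
  ∑ j ∈ Finset.range k, p ^ j • digit p lam j

/-- The recursive family `E^k : X⁺ → R` built from `E⁰ = E0` and the integers
`p_{μ,λ} = P μ λ`:  `E^k_λ = ∑_μ p_{μ, ∑_{j≥k-1} p^{j-k+1} λ^j} · E^{k-1}_{∑_{0≤j≤k-2} p^j λ^j + p^{k-1} μ}`
for `k ≥ 1`. -/
noncomputable def E (p : ℕ) (P : (I → ℕ) → (I → ℕ) → ℤ) (E0 : (I → ℕ) → R) :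
    ℕ → (I → ℕ) → R
  | 0 => E0
  | k + 1 => fun lam =>
      ∑ᶠ mu : I → ℕ, P mu (shift p k lam) • E p P E0 k (trunc p k lam + p ^ k • mu)

set_option linter.unusedSectionVars false
set_option linter.unusedVariables false
set_option maxHeartbeats 1000000

lemma sum_digits {p : ℕ} (hp : 2 ≤ p) : ∀ n m, m < p ^ n →
    ∑ j ∈ Finset.range n, p ^ j * (m / p ^ j % p) = m := by
  intro n
  induction n with
  | zero => intro m hm; simp at hm ⊢; omega
  | succ n ih =>
    intro m hm
    rw [Finset.sum_range_succ']
    have h1 : ∀ j, p ^ (j + 1) * (m / p ^ (j + 1) % p) =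
        p * (p ^ j * (m / p / p ^ j % p)) := by
      intro j
      rw [Nat.div_div_eq_div_mul, ← pow_succ', pow_succ']
      ring
    simp only [h1, pow_zero, Nat.div_one, one_mul, ← Finset.mul_sum]
    rw [ih (m / p) (by
      have hp0 : 0 < p := by omega
      rw [Nat.div_lt_iff_lt_mul hp0]
      calc m < p ^ (n + 1) := hm
        _ = p ^ n * p := by rw [pow_succ])]
    exact Nat.div_add_mod m p

lemma trunc_apply (p k : ℕ) (lam : I → ℕ) (i : I) :
    trunc p k lam i = lam i % p ^ k := by
  induction k with
  | zero => simp [trunc, Nat.mod_one]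
  | succ k ih =>
    have : trunc p (k + 1) lam i = trunc p k lam i + p ^ k * (lam i / p ^ k % p) := by
      simp only [trunc, Finset.sum_apply, Pi.smul_apply, smul_eq_mul, digit,
        Finset.sum_range_succ]
    rw [this, ih]
    have h2 : lam i % p ^ (k + 1) = p ^ k * (lam i / p ^ k % p) + lam i % p ^ k := by
      conv_lhs => rw [← Nat.div_add_mod (lam i % p ^ (k + 1)) (p ^ k)]
      rw [pow_succ, Nat.mod_mul_right_div_self, Nat.mod_mod_of_dvd _ (dvd_mul_right (p ^ k) p)]
    omega

lemma shift_apply {p : ℕ} (hp : 2 ≤ p) (k : ℕ) (lam : I → ℕ) :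
    shift p k lam = fun i => lam i / p ^ k := by
  classical
  set n := Finset.univ.sup lam with hn
  have hlt : ∀ i, lam i < p ^ (k + n) := by
    intro i
    have h1 : lam i ≤ n := Finset.le_sup (Finset.mem_univ i)
    calc lam i ≤ n := h1
      _ < 2 ^ n := Nat.lt_two_pow_self (n := n)
      _ ≤ 2 ^ (k + n) := Nat.pow_le_pow_right (by norm_num) (by omega)
      _ ≤ p ^ (k + n) := Nat.pow_le_pow_left hp _
  have hsub : (Function.support fun j => p ^ j • digit p lam (k + j)) ⊆
      ↑(Finset.range n) := by
    intro j hj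
    simp only [Finset.coe_range, Set.mem_Iio]
    by_contra h
    push_neg at h
    apply hj
    have : digit p lam (k + j) = 0 := by
      funext i
      show lam i / p ^ (k + j) % p = 0
      rw [Nat.div_eq_of_lt, Nat.zero_mod]
      calc lam i < p ^ (k + n) := hlt i
        _ ≤ p ^ (k + j) := Nat.pow_le_pow_right (by omega) (by omega)
    simp [this]
  rw [shift, finsum_eq_sum_of_support_subset _ hsub]
  funext i
  rw [Finset.sum_apply]
  have : ∀ j, (p ^ j • digit p lam (k + j)) i = p ^ j * (lam i / p ^ k / p ^ j % p) := by
    intro j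
    simp only [Pi.smul_apply, smul_eq_mul, digit, Nat.div_div_eq_div_mul, ← pow_add]
  simp only [this]
  apply sum_digits hp
  have hp0 : 0 < p ^ k := Nat.pow_pos (by omega)
  rw [Nat.div_lt_iff_lt_mul hp0, ← pow_add, Nat.add_comm n k]
  exact hlt i

lemma digit_add {p : ℕ} (hp : 2 ≤ p) {h k : ℕ} (hh : h ≤ k) (lam mu : I → ℕ) :
    digit p (trunc p (k + 1) lam + p ^ (k + 1) • mu) h = digit p lam h := by
  funext i
  have hp0 : 0 < p ^ h := Nat.pow_pos (by omega)
  show (trunc p (k + 1) lam i + p ^ (k + 1) * mu i) / p ^ h % p = lam i / p ^ h % p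
  rw [trunc_apply]
  have hsplit : p ^ (k + 1) = p ^ h * (p * p ^ (k - h)) := by
    rw [← pow_succ']
    rw [← pow_add]
    congr 1
    omega
  rw [hsplit, mul_assoc, Nat.add_mul_div_left _ _ hp0, Nat.mod_mul_right_div_self,
    mul_assoc p, Nat.add_mul_mod_self_left, Nat.mod_mod_of_dvd _ (dvd_mul_right p (p ^ (k - h)))]

lemma shift_add {p : ℕ} (hp : 2 ≤ p) (k : ℕ) (lam mu : I → ℕ) :
    shift p k (trunc p (k + 1) lam + p ^ (k + 1) • mu) = digit p lam k + p • mu := by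
  rw [shift_apply hp]
  funext i
  have hp0 : 0 < p ^ k := Nat.pow_pos (by omega)
  show (trunc p (k + 1) lam i + p ^ (k + 1) * mu i) / p ^ k = lam i / p ^ k % p + p * mu i
  rw [trunc_apply, pow_succ, mul_assoc, Nat.add_mul_div_left _ _ hp0,
    Nat.mod_mul_right_div_self]

lemma apply_le_N (N : (I → ℕ) →+ ℕ) (hN_zero : ∀ a, N a = 0 → a = 0)
    (x : I → ℕ) (i : I) : x i ≤ N x := by
  classical
  have hx : ∑ j, Pi.single j (x j) = x := Finset.univ_sum_single x
  have hNx : N x = ∑ j, N (Pi.single j (x j)) := by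
    conv_lhs => rw [← hx]
    exact map_sum N _ _
  have hone : ∀ j : I, 1 ≤ N (Pi.single j (1 : ℕ)) := by
    intro j
    by_contra hc
    have h0 : N (Pi.single j (1 : ℕ)) = 0 := by omega
    have := congrFun (hN_zero _ h0) j
    simp at this
  have h1 : x i ≤ N (Pi.single i (x i)) := by
    have : Pi.single i (x i) = x i • (Pi.single i 1 : I → ℕ) := by
      rw [← Pi.single_smul, smul_eq_mul, mul_one]
    rw [this, map_nsmul, smul_eq_mul]
    calc x i = x i * 1 := (mul_one _).symm
      _ ≤ x i * N (Pi.single i 1) := Nat.mul_le_mul_left _ (hone i)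
  calc x i ≤ N (Pi.single i (x i)) := h1
    _ ≤ ∑ j, N (Pi.single j (x j)) := Finset.single_le_sum (f := fun j => N (Pi.single j (x j))) (fun _ _ => Nat.zero_le _) (Finset.mem_univ i)
    _ = N x := hNx.symm

lemma sublevel_finite (N : (I → ℕ) →+ ℕ) (hN_zero : ∀ a, N a = 0 → a = 0)
    (n : ℕ) : {x : I → ℕ | N x ≤ n}.Finite := by
  apply Set.Finite.subset (Set.Finite.pi (fun _ : I => Set.finite_Iic n))
  intro x hx
  exact fun i _ => le_trans (apply_le_N N hN_zero x i) hx

lemma pointwise_N_mono (N : (I → ℕ) →+ ℕ) {a b : I → ℕ} (hab : ∀ i, a i ≤ b i) :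
    N a ≤ N b := by
  have : b = a + fun i => b i - a i := by
    funext i
    have := hab i
    simp only [Pi.add_apply]
    omega
  rw [this, map_add]
  omega

lemma support_finite (p : ℕ)
    (le : (I → ℕ) → (I → ℕ) → Prop)
    (N : (I → ℕ) →+ ℕ)
    (hN_zero : ∀ a, N a = 0 → a = 0)
    (hN_mono : ∀ a b, le a b → N a ≤ N b)
    (P : (I → ℕ) → (I → ℕ) → ℤ)
    (hP_le : ∀ mu lam, P mu lam ≠ 0 → le mu lam)
    (E0 : (I → ℕ) → R) (k : ℕ) (lam : I → ℕ) :
    (Function.support fun mu : Fin (k + 1) → I → ℕ =>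
      ((∏ h : Fin k, P (mu h.castSucc) (digit p lam (h : ℕ) + p • mu h.succ)) *
        P (mu (Fin.last k)) (shift p k lam)) • E0 (mu 0)).Finite := by
  classical
  set S := N (shift p k lam) with hS
  set C := N lam + S with hC
  set M := C * (p + 1) ^ k with hM
  apply Set.Finite.subset
    (Set.Finite.pi (fun _ : Fin (k + 1) => sublevel_finite N hN_zero M))
  intro mu hmu
  simp only [Function.mem_support, ne_eq] at hmu
  -- extract nonvanishing of factors
  have hcoef : ((∏ h : Fin k, P (mu h.castSucc) (digit p lam (h : ℕ) + p • mu h.succ)) *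
      P (mu (Fin.last k)) (shift p k lam)) ≠ 0 := by
    intro h0; apply hmu; rw [h0, zero_smul]
  have hprod := mul_ne_zero_iff.mp hcoef
  have hlast : N (mu (Fin.last k)) ≤ S := hN_mono _ _ (hP_le _ _ hprod.2)
  have hstep : ∀ h : Fin k, N (mu h.castSucc) ≤ N lam + p * N (mu h.succ) := by
    intro h
    have hf : P (mu h.castSucc) (digit p lam (h : ℕ) + p • mu h.succ) ≠ 0 :=
      Finset.prod_ne_zero_iff.mp hprod.1 h (Finset.mem_univ h)
    have h1 := hN_mono _ _ (hP_le _ _ hf)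
    have h2 : N (digit p lam (h : ℕ) + p • mu h.succ) = N (digit p lam (h : ℕ)) + p * N (mu h.succ) := by
      rw [map_add, map_nsmul, smul_eq_mul]
    have h3 : N (digit p lam (h : ℕ)) ≤ N lam := by
      apply pointwise_N_mono
      intro i
      calc lam i / p ^ (h : ℕ) % p ≤ lam i / p ^ (h : ℕ) := Nat.mod_le _ _
        _ ≤ lam i := Nat.div_le_self _ _
    omega
  -- downward induction bound
  have key : ∀ d, d ≤ k → N (mu ⟨k - d, by omega⟩) ≤ C * (p + 1) ^ d := by
    intro d
    induction d with
    | zero =>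
      intro _
      have : (⟨k - 0, by omega⟩ : Fin (k + 1)) = Fin.last k := by
        apply Fin.ext; simp
      rw [this]
      calc N (mu (Fin.last k)) ≤ S := hlast
        _ ≤ C * (p + 1) ^ 0 := by rw [pow_zero, mul_one, hC]; omega
    | succ d ihd =>
      intro hdk
      have hd : d ≤ k := by omega
      have hbd := ihd hd
      have hlt : k - (d + 1) < k := by omega
      set h0 : Fin k := ⟨k - (d + 1), hlt⟩ with hh0
      have e1 : (⟨k - (d + 1), by omega⟩ : Fin (k + 1)) = h0.castSucc := by
        apply Fin.ext; simp [hh0]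
      have e2 : h0.succ = (⟨k - d, by omega⟩ : Fin (k + 1)) := by
        apply Fin.ext; simp [hh0]; omega
      rw [e1]
      calc N (mu h0.castSucc) ≤ N lam + p * N (mu h0.succ) := hstep h0
        _ ≤ N lam + p * (C * (p + 1) ^ d) := by
            rw [e2]; exact Nat.add_le_add_left (Nat.mul_le_mul_left p hbd) _
        _ ≤ C * (p + 1) ^ (d + 1) := by
            have hC1 : N lam ≤ C * (p + 1) ^ d := by
              calc N lam ≤ C := by omega
                _ = C * 1 := (mul_one C).symm
                _ ≤ C * (p + 1) ^ d := Nat.mul_le_mul_left C (Nat.one_le_pow _ _ (by omega))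
            have : C * (p + 1) ^ (d + 1) = C * (p + 1) ^ d + p * (C * (p + 1) ^ d) := by ring
            omega
  -- conclude
  intro h _
  show N (mu h) ≤ M
  have hhk : (h : ℕ) ≤ k := Nat.lt_succ_iff.mp h.isLt
  have e3 : h = (⟨k - (k - (h : ℕ)), by omega⟩ : Fin (k + 1)) := by
    apply Fin.ext; simp; omega
  rw [e3]
  calc N (mu ⟨k - (k - (h : ℕ)), by omega⟩) ≤ C * (p + 1) ^ (k - (h : ℕ)) :=
        key (k - (h : ℕ)) (by omega)
    _ ≤ C * (p + 1) ^ k := Nat.mul_le_mul_left C (Nat.pow_le_pow_right (by omega) (by omega))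

/-- paper 4(c): for every `λ ∈ X⁺` and `k ≥ 1` (here written `k + 1`),
`E^{k+1}_λ = ∑_{(μ₀,…,μ_k)} (∏_{0≤h≤k-1} p_{μ_h, λ^h + p·μ_{h+1}}) · p_{μ_k, ∑_{j≥k} p^{j-k} λ^j} · E⁰_{μ₀}`,
a sum with finitely many nonzero terms. -/
theorem E_eq_sum_prod_p_E_zero {I : Type*} [Fintype I] {R : Type*} [CommRing R]
    (p : ℕ) (hp : 2 ≤ p)
    (le : (I → ℕ) → (I → ℕ) → Prop)
    (hle_refl : ∀ a, le a a)
    (hle_antisymm : ∀ a b, le a b → le b a → a = b)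
    (hle_trans : ∀ a b c, le a b → le b c → le a c)
    (N : (I → ℕ) →+ ℕ)
    (hN_zero : ∀ a, N a = 0 → a = 0)
    (hN_mono : ∀ a b, le a b → N a ≤ N b)
    (P : (I → ℕ) → (I → ℕ) → ℤ)
    (hP_le : ∀ mu lam, P mu lam ≠ 0 → le mu lam)
    (hP_diag : ∀ lam, P lam lam = 1)
    (E0 : (I → ℕ) → R) (k : ℕ) (lam : I → ℕ) :
    (Function.support fun mu : Fin (k + 1) → I → ℕ =>
      ((∏ h : Fin k, P (mu h.castSucc) (digit p lam (h : ℕ) + p • mu h.succ)) *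
        P (mu (Fin.last k)) (shift p k lam)) • E0 (mu 0)).Finite ∧
    E p P E0 (k + 1) lam =
      ∑ᶠ mu : Fin (k + 1) → I → ℕ,
        ((∏ h : Fin k, P (mu h.castSucc) (digit p lam (h : ℕ) + p • mu h.succ)) *
          P (mu (Fin.last k)) (shift p k lam)) • E0 (mu 0) := by
  classical
  induction k generalizing lam with
  | zero =>
    refine ⟨support_finite p le N hN_zero hN_mono P hP_le E0 0 lam, ?_⟩
    have hE : E p P E0 1 lam = ∑ᶠ mu : I → ℕ, P mu (shift p 0 lam) • E0 mu := by
      show (∑ᶠ mu : I → ℕ, P mu (shift p 0 lam) • E p P E0 0 (trunc p 0 lam + p ^ 0 • mu)) = _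
      apply finsum_congr
      intro mu
      have : trunc p 0 lam + p ^ 0 • mu = mu := by
        funext i
        simp [trunc]
      rw [this]
      rfl
    rw [hE, ← finsum_comp_equiv (Equiv.funUnique (Fin 1) (I → ℕ)).symm]
    apply finsum_congr
    intro x
    simp
  | succ k ih =>
    refine ⟨support_finite p le N hN_zero hN_mono P hP_le E0 (k + 1) lam, ?_⟩
    set S := shift p (k + 1) lam with hS
    set F : (Fin (k + 2) → I → ℕ) → R := fun mu =>
      ((∏ h : Fin (k + 1), P (mu h.castSucc) (digit p lam (h : ℕ) + p • mu h.succ)) *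
        P (mu (Fin.last (k + 1))) S) • E0 (mu 0) with hF
    have hFfin : (Function.support F).Finite :=
      support_finite p le N hN_zero hN_mono P hP_le E0 (k + 1) lam
    let e : ((I → ℕ) × (Fin (k + 1) → I → ℕ)) ≃ (Fin (k + 2) → I → ℕ) :=
      { toFun := fun q => Fin.snoc q.2 q.1
        invFun := fun mu => (mu (Fin.last (k + 1)), Fin.init mu)
        left_inv := fun q => by simp
        right_inv := fun mu => by simp }
    have hkey : ∀ (a : I → ℕ) (b : Fin (k + 1) → I → ℕ),
        F (e (a, b)) = P a S •
          (((∏ h : Fin k, P (b h.castSucc) (digit p lam (h : ℕ) + p • b h.succ)) *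
            P (b (Fin.last k)) (digit p lam k + p • a)) • E0 (b 0)) := by
      intro a b
      have hmu : e (a, b) = (Fin.snoc b a : Fin (k + 2) → I → ℕ) := rfl
      have h0 : (Fin.snoc b a : Fin (k + 2) → I → ℕ) 0 = b 0 := by
        rw [show (0 : Fin (k + 2)) = Fin.castSucc 0 from rfl, Fin.snoc_castSucc]
      rw [hmu, hF, smul_smul]
      simp only [Fin.prod_univ_castSucc, Fin.snoc_castSucc, Fin.snoc_last, Fin.succ_last,
        Fin.coe_castSucc, Fin.succ_castSucc, Fin.val_last, h0]
      congr 1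
      ring
    have hstep1 : E p P E0 (k + 2) lam =
        ∑ᶠ a : I → ℕ, P a S • E p P E0 (k + 1) (trunc p (k + 1) lam + p ^ (k + 1) • a) := rfl
    rw [hstep1]
    have hstep2 : ∀ a : I → ℕ,
        P a S • E p P E0 (k + 1) (trunc p (k + 1) lam + p ^ (k + 1) • a) =
        ∑ᶠ b : Fin (k + 1) → I → ℕ, F (e (a, b)) := by
      intro a
      obtain ⟨hfin, heq⟩ := ih (trunc p (k + 1) lam + p ^ (k + 1) • a)
      have hdig : ∀ h : Fin k,
          digit p (trunc p (k + 1) lam + p ^ (k + 1) • a) (h : ℕ) = digit p lam (h : ℕ) :=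
        fun h => digit_add hp (by omega) lam a
      have hsh : shift p k (trunc p (k + 1) lam + p ^ (k + 1) • a) =
          digit p lam k + p • a := shift_add hp k lam a
      rw [heq]
      simp only [hdig, hsh] at hfin ⊢
      rw [smul_finsum' _ hfin]
      exact finsum_congr fun b => (hkey a b).symm
    simp only [hstep2]
    have hq : (Function.support fun q : ((I → ℕ) × (Fin (k + 1) → I → ℕ)) => F (e q)).Finite := by
      have : (fun q : ((I → ℕ) × (Fin (k + 1) → I → ℕ)) => F (e q)) = F ∘ e := rfl
      rw [this, Function.support_comp_eq_preimage]
      exact hFfin.preimage (e.injective.injOn)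
    rw [← finsum_curry _ hq]
    exact finsum_comp_equiv e


end LusztigChar
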